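/- For any symmetric positive semi-definite d×d matrix R and any full-rank d×k matrix U with k ≤ d, it holds that tr(RU(UᵀRU)†UᵀR) ≥ tr(U(UᵀU)⁻¹UᵀR), where † denotes the Moore–Penrose pseudoinverse. -/

import Mathlib

open Matrix

lemma psd_trace_nonneg {n : ℕ} {M : Matrix (Fin n) (Fin n) ℝ} (hM : M.PosSemidef) :
    0 ≤ M.trace := by
  rw [Matrix.trace]
  apply Finset.sum_nonneg
  intro i _
  exact hM.diag_nonneg

lemma aux_isUnit {d k : ℕ} (U : Matrix (Fin d) (Fin k) ℝ) (hU : U.rank = k) :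
    IsUnit (Uᵀ * U) := by
  have hrank : (Uᵀ * U).rank = k := by rw [Matrix.rank_transpose_mul_self, hU]
  have hsurj : Function.Surjective (Uᵀ * U).mulVecLin := by
    rw [← LinearMap.range_eq_top]
    apply Submodule.eq_top_of_finrank_eq
    rw [← Matrix.rank, hrank]
    simp [Module.finrank_pi]
  have hbij : Function.Bijective (Uᵀ * U).mulVecLin :=
    ⟨LinearMap.injective_iff_surjective.mpr hsurj, hsurj⟩
  have h1 : IsUnit (Matrix.toLinAlgEquiv' (Uᵀ * U)) := by
    rw [Module.End.isUnit_iff]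
    convert hbij using 2
    rfl
  have := h1.map (Matrix.toLinAlgEquiv' (R := ℝ) (n := Fin k)).symm
  simpa using this

/-- Properties of the projection `A (AᵀA)† Aᵀ` built from Penrose conditions. -/
lemma aux_proj {d k : ℕ} (A : Matrix (Fin d) (Fin k) ℝ) (P S : Matrix (Fin k) (Fin k) ℝ)
    (hAA : Aᵀ * A = S) (hSsym : Sᵀ = S)
    (h1 : S * P * S = S) (h2 : P * S * P = P)
    (h3 : (S * P)ᵀ = S * P) (h4 : (P * S)ᵀ = P * S) :
    (A * P * Aᵀ)ᵀ = A * P * Aᵀ ∧ (A * P * Aᵀ) * (A * P * Aᵀ) = A * P * Aᵀ ∧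
      (A * P * Aᵀ) * A = A := by
  have hSPt : S * Pᵀ = P * S := by
    have h := h4; rw [Matrix.transpose_mul, hSsym] at h; exact h
  have hPtS : Pᵀ * S = S * P := by
    have h := h3; rw [Matrix.transpose_mul, hSsym] at h; exact h
  have hAAX : ∀ (X : Matrix (Fin k) (Fin k) ℝ), Aᵀ * (A * X) = S * X := by
    intro X; rw [← Matrix.mul_assoc, hAA]
  have hAAY : ∀ (X : Matrix (Fin k) (Fin d) ℝ), Aᵀ * (A * X) = S * X := by
    intro X; rw [← Matrix.mul_assoc, hAA]
  have hPtSX : ∀ (X : Matrix (Fin k) (Fin k) ℝ), Pᵀ * (S * X) = S * (P * X) := by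
    intro X; rw [← Matrix.mul_assoc, hPtS, Matrix.mul_assoc]
  have hSPSX : ∀ (X : Matrix (Fin k) (Fin k) ℝ), S * (P * (S * X)) = S * X := by
    intro X; rw [← Matrix.mul_assoc, ← Matrix.mul_assoc, h1]
  have hSPS : S * (P * S) = S := by rw [← Matrix.mul_assoc, h1]
  have hAPS : A * P * S = A := by
    have hM : (A * P * S - A)ᵀ * (A * P * S - A) = 0 := by
      simp only [Matrix.transpose_sub, Matrix.transpose_mul, hSsym, Matrix.sub_mul,
        Matrix.mul_sub, Matrix.mul_assoc, hAAX, hAA, hPtSX, hSPSX, hSPS]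
      abel
    have h0 : A * P * S - A = 0 := by
      have h := Matrix.conjTranspose_mul_self_eq_zero (A := A * P * S - A)
      rw [Matrix.conjTranspose_eq_transpose_of_trivial] at h
      exact h.mp hM
    exact sub_eq_zero.mp h0
  have hAt2 : Aᵀ = S * (Pᵀ * Aᵀ) := by
    conv_lhs => rw [← hAPS]
    rw [Matrix.transpose_mul, Matrix.transpose_mul, hSsym]
  have e1 : A * (Pᵀ * Aᵀ) = A * (P * (P * (S * Aᵀ))) := by
    nth_rewrite 1 [← hAPS]
    simp only [Matrix.mul_assoc]
    rw [← Matrix.mul_assoc S Pᵀ Aᵀ, hSPt]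
    simp only [Matrix.mul_assoc]
  have e2 : A * (P * Aᵀ) = A * (P * (P * (S * Aᵀ))) := by
    nth_rewrite 1 [hAt2]
    rw [← Matrix.mul_assoc S Pᵀ Aᵀ, hSPt]
    simp only [Matrix.mul_assoc]
  have hPSPY : ∀ (X : Matrix (Fin k) (Fin d) ℝ), P * (S * (P * X)) = P * X := by
    intro X; rw [← Matrix.mul_assoc, ← Matrix.mul_assoc, h2]
  refine ⟨?_, ?_, ?_⟩
  · rw [Matrix.transpose_mul, Matrix.transpose_mul, Matrix.transpose_transpose,
      Matrix.mul_assoc A P Aᵀ, e1, ← e2]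
  · simp only [Matrix.mul_assoc, hAAX, hAAY, hPSPY]
  · simp only [Matrix.mul_assoc]
    rw [hAA, ← Matrix.mul_assoc, hAPS]

/-- abstract trace inequality for projections. -/
lemma aux_trace {d : ℕ} (B Pi Q : Matrix (Fin d) (Fin d) ℝ)
    (hBsym : Bᵀ = B) (hPisym : Piᵀ = Pi) (hPiPi : Pi * Pi = Pi)
    (hQsym : Qᵀ = Q) (hQQ : Q * Q = Q) (hPiBQ : Pi * (B * Q) = B * Q) :
    (Q * (B * B)).trace ≤ (B * Pi * B).trace := by
  have hQB : (Q * B) * Pi = Q * B := by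
    have h := congrArg Matrix.transpose hPiBQ
    rw [Matrix.transpose_mul, Matrix.transpose_mul, hQsym, hBsym, hPisym] at h
    exact h
  have hQ1 : (1 - Q) * (1 - Q) = 1 - Q := by
    have h5 : (1 - Q) * (1 - Q) = 1 - Q - Q + Q * Q := by noncomm_ring
    rw [h5, hQQ]; abel
  have hX : ((1 - Q) * B)ᵀ * ((1 - Q) * B) = B * (1 - Q) * B := by
    simp only [Matrix.transpose_mul, Matrix.transpose_sub, Matrix.transpose_one, hQsym, hBsym]
    rw [show B * (1 - Q) * ((1 - Q) * B) = B * ((1 - Q) * (1 - Q)) * B from by noncomm_ring, hQ1]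
  have hXpsd : (B * (1 - Q) * B).PosSemidef := by
    rw [← hX]
    have h := Matrix.posSemidef_conjTranspose_mul_self ((1 - Q) * B)
    rwa [Matrix.conjTranspose_eq_transpose_of_trivial] at h
  have hPsd : (Pi * (B * (1 - Q) * B) * Pi).PosSemidef := by
    have h := hXpsd.mul_mul_conjTranspose_same Pi
    rwa [Matrix.conjTranspose_eq_transpose_of_trivial, hPisym] at h
  have h0 : 0 ≤ (Pi * (B * (1 - Q) * B) * Pi).trace := psd_trace_nonneg hPsd
  have t1 : (B * Pi * B).trace = (Pi * (B * B) * Pi).trace := by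
    calc (B * Pi * B).trace = ((B * Pi) * (Pi * B)).trace := by
          rw [show (B * Pi) * (Pi * B) = B * (Pi * Pi) * B from by noncomm_ring, hPiPi]
      _ = ((Pi * B) * (B * Pi)).trace := Matrix.trace_mul_comm _ _
      _ = (Pi * (B * B) * Pi).trace := by rw [Matrix.mul_assoc, Matrix.mul_assoc,
            ← Matrix.mul_assoc B B Pi]
  have e3 : (B * Q) * (Q * B) = B * (Q * B) := by
    rw [show (B * Q) * (Q * B) = B * ((Q * Q) * B) from by noncomm_ring, hQQ]
  have e4 : (Pi * (B * Q)) * ((Q * B) * Pi) = (B * Q) * (Q * B) := by rw [hPiBQ, hQB]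
  have t2 : (Q * (B * B)).trace = (Pi * ((B * Q) * (Q * B)) * Pi).trace := by
    calc (Q * (B * B)).trace = ((Q * B) * B).trace := by rw [Matrix.mul_assoc]
      _ = (B * (Q * B)).trace := Matrix.trace_mul_comm _ _
      _ = ((B * Q) * (Q * B)).trace := by rw [e3]
      _ = ((Pi * (B * Q)) * ((Q * B) * Pi)).trace := by rw [e4]
      _ = (Pi * ((B * Q) * (Q * B)) * Pi).trace := by
          rw [show (Pi * (B * Q)) * ((Q * B) * Pi) = Pi * ((B * Q) * (Q * B)) * Pi from by
            noncomm_ring]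
  have hdiff : Pi * (B * B) * Pi - Pi * ((B * Q) * (Q * B)) * Pi
      = Pi * (B * (1 - Q) * B) * Pi := by
    rw [show (B * Q) * (Q * B) = B * (Q * Q) * B from by noncomm_ring, hQQ]
    noncomm_ring
  have := congrArg Matrix.trace hdiff
  rw [Matrix.trace_sub] at this
  rw [t1, t2]
  linarith

/-- The four Penrose conditions characterizing the Moore–Penrose pseudoinverse. -/
def IsMoorePenrose {m n : Type*} [Fintype m] [Fintype n]
    (S : Matrix m n ℝ) (P : Matrix n m ℝ) : Prop :=
  S * P * S = S ∧ P * S * P = P ∧ (S * P)ᵀ = S * P ∧ (P * S)ᵀ = P * S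

/-- **Lemma 3.3**: for a symmetric PSD matrix `R` and a full rank `d × k` matrix `U`
with `k ≤ d`, `tr(RU(UᵀRU)†UᵀR) ≥ tr(U(UᵀU)⁻¹UᵀR)`. -/
theorem trace_pinv_lower_bound {d k : ℕ} (hk : k ≤ d)
    (R : Matrix (Fin d) (Fin d) ℝ) (hR : R.PosSemidef)
    (U : Matrix (Fin d) (Fin k) ℝ) (hU : U.rank = k)
    (P : Matrix (Fin k) (Fin k) ℝ)
    (hP : IsMoorePenrose (Uᵀ * R * U) P) :
    (U * (Uᵀ * U)⁻¹ * Uᵀ * R).trace ≤ (R * U * P * Uᵀ * R).trace := by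
  classical
  obtain ⟨h1, h2, h3, h4⟩ := hP
  obtain ⟨B, hBB, hBsym⟩ : ∃ B : Matrix (Fin d) (Fin d) ℝ, B * B = R ∧ Bᵀ = B := by
    open MatrixOrder in
    obtain ⟨X, hX, -, hXX⟩ := CFC.exists_sqrt_of_isSelfAdjoint_of_quasispectrumRestricts
      hR.isHermitian (QuasispectrumRestricts.nnreal_of_nonneg hR.nonneg)
    refine ⟨X, hXX, ?_⟩
    have h := hX
    rwa [IsSelfAdjoint, Matrix.star_eq_conjTranspose, Matrix.conjTranspose_eq_transpose_of_trivial] at h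
  have hRsym : Rᵀ = R := by
    have h := hR.isHermitian
    rwa [Matrix.IsHermitian, Matrix.conjTranspose_eq_transpose_of_trivial] at h
  have hSsym : (Uᵀ * R * U)ᵀ = Uᵀ * R * U := by
    simp only [Matrix.transpose_mul, Matrix.transpose_transpose, hRsym, Matrix.mul_assoc]
  have hAA : (B * U)ᵀ * (B * U) = Uᵀ * R * U := by
    rw [Matrix.transpose_mul, hBsym, Matrix.mul_assoc Uᵀ B (B * U),
      ← Matrix.mul_assoc B B U, hBB, ← Matrix.mul_assoc]
  obtain ⟨hPisym, hPiPi, hPiA⟩ := aux_proj (B * U) P (Uᵀ * R * U) hAA hSsym h1 h2 h3 h4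
  -- invertibility of UᵀU
  have hUnit : IsUnit (Uᵀ * U) := aux_isUnit U hU
  have hdet : IsUnit (Uᵀ * U).det := (Matrix.isUnit_iff_isUnit_det _).mp hUnit
  have hinv2 : (Uᵀ * U) * (Uᵀ * U)⁻¹ = 1 := Matrix.mul_nonsing_inv _ hdet
  -- properties of Q
  have hQsym : (U * (Uᵀ * U)⁻¹ * Uᵀ)ᵀ = U * (Uᵀ * U)⁻¹ * Uᵀ := by
    simp only [Matrix.transpose_mul, Matrix.transpose_transpose,
      Matrix.transpose_nonsing_inv, Matrix.mul_assoc]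
  have hQQ : (U * (Uᵀ * U)⁻¹ * Uᵀ) * (U * (Uᵀ * U)⁻¹ * Uᵀ) = U * (Uᵀ * U)⁻¹ * Uᵀ := by
    simp only [Matrix.mul_assoc]
    rw [← Matrix.mul_assoc Uᵀ U ((Uᵀ * U)⁻¹ * Uᵀ), ← Matrix.mul_assoc (Uᵀ * U) (Uᵀ * U)⁻¹ Uᵀ,
      hinv2, Matrix.one_mul]
  have hPiBQ : (B * U * P * (B * U)ᵀ) * (B * (U * (Uᵀ * U)⁻¹ * Uᵀ))
      = B * (U * (Uᵀ * U)⁻¹ * Uᵀ) := by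
    have e : B * (U * (Uᵀ * U)⁻¹ * Uᵀ) = (B * U) * ((Uᵀ * U)⁻¹ * Uᵀ) := by
      simp only [Matrix.mul_assoc]
    rw [e, ← Matrix.mul_assoc, hPiA]
  have key := aux_trace B (B * U * P * (B * U)ᵀ) (U * (Uᵀ * U)⁻¹ * Uᵀ)
    hBsym hPisym hPiPi hQsym hQQ hPiBQ
  have eL : U * (Uᵀ * U)⁻¹ * Uᵀ * R = (U * (Uᵀ * U)⁻¹ * Uᵀ) * (B * B) := by rw [hBB]
  have eR : R * U * P * Uᵀ * R = B * (B * U * P * (B * U)ᵀ) * B := by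
    rw [← hBB]
    simp only [Matrix.transpose_mul, hBsym, Matrix.mul_assoc]
  rw [eL, eR]
  exact key
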